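/- Let d ≥ 1, let B be an invertible real d×d matrix, and let Ω ⊂ ℝ^d be a bounded measurable fundamental domain of the lattice 2π(B^T)^{−1}ℤ^d, i.e., ∑_{k∈ℤ^d} χ_Ω(x + 2π(B^T)^{−1}k) = 1 for every x ∈ ℝ^d. Let (g_n)_{n∈ℕ} be measurable functions ℝ^d → [0,1] such that for almost every ω the periodization G_n(ω) := ∑_{l∈ℤ^d} g_n(ω − 2π(B^T)^{−1}l) satisfies G_n(ω) ≤ 1 for all n, and G_n(ω) → 1 as n → ∞ for almost every ω. Then for every k ∈ ℤ^d with k ≠ 0, ∫_{ℝ^d} g_n(ω) e^{−i (Bk)·ω} dω → 0 as n → ∞. -/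

import Mathlib

open Matrix Real MeasureTheory Filter

lemma tsum_ofReal_toReal {ι : Type*} (f : ι → ℝ) (hf : ∀ i, 0 ≤ f i) :
    (∑' i, ENNReal.ofReal (f i)).toReal = ∑' i, f i := by
  by_cases h : Summable f
  · rw [← ENNReal.ofReal_tsum_of_nonneg hf h, ENNReal.toReal_ofReal (tsum_nonneg hf)]
  · rw [tsum_eq_zero_of_not_summable h]
    have hinf : ∑' i, ENNReal.ofReal (f i) = ⊤ := by
      by_contra hne
      exact h ((ENNReal.summable_toReal hne).congr fun i => ENNReal.toReal_ofReal (hf i))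
    simp [hinf]

lemma exp_aux (a : ℝ) (m : ℤ) :
    Complex.exp (-(Complex.I * ((a + 2 * π * m : ℝ) : ℂ))) =
      Complex.exp (-(Complex.I * (a : ℂ))) := by
  have h : -(Complex.I * ((a + 2 * π * m : ℝ) : ℂ)) =
      -(Complex.I * (a : ℂ)) + ((-m : ℤ) : ℂ) * (2 * (π : ℂ) * Complex.I) := by
    push_cast; ring
  rw [h, Complex.exp_add, Complex.exp_int_mul_two_pi_mul_I, mul_one]

lemma exp_aux2 (a : ℝ) :
    Complex.exp (-(Complex.I * ((a + π : ℝ) : ℂ))) =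
      -Complex.exp (-(Complex.I * (a : ℂ))) := by
  have h : -(Complex.I * ((a + π : ℝ) : ℂ)) =
      -(Complex.I * (a : ℂ)) + -((π : ℂ) * Complex.I) := by push_cast; ring
  have hpi : Complex.exp (-((π : ℂ) * Complex.I)) = -1 := by
    rw [Complex.exp_neg, Complex.exp_pi_mul_I]; norm_num
  rw [h, Complex.exp_add, hpi, mul_neg_one]

lemma norm_exp_aux (a : ℝ) : ‖Complex.exp (-(Complex.I * (a : ℂ)))‖ = 1 := by
  rw [Complex.norm_exp]
  simp

/-- Let `d ≥ 1`, `B` an invertible real `d×d` matrix, and `Ω ⊂ ℝ^d` a bounded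
measurable fundamental domain of the lattice `2π(Bᵀ)⁻¹ℤ^d`. Let `g n : ℝ^d → [0,1]` be
measurable functions such that for almost every `ω` the periodizations
`G n ω = ∑_{l∈ℤ^d} g n (ω − 2π(Bᵀ)⁻¹l)` satisfy `G n ω ≤ 1` for all `n` and `G n ω → 1`.
Then for every nonzero `k ∈ ℤ^d`, `∫ g n (ω) e^{−i(Bk)·ω} dω → 0` as `n → ∞`. -/
theorem stmt_14 (d : ℕ) (hd : 1 ≤ d) (B : Matrix (Fin d) (Fin d) ℝ)
    (hB : IsUnit B.det) (Ω : Set (Fin d → ℝ))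
    (hΩmeas : MeasurableSet Ω) (hΩbdd : Bornology.IsBounded Ω)
    (hfund : ∀ x : Fin d → ℝ,
      (∑' k : Fin d → ℤ,
        Set.indicator Ω (fun _ => (1 : ℝ))
          (x + (2 * π) • (B.transpose)⁻¹.mulVec (fun i => (k i : ℝ)))) = 1)
    (g : ℕ → (Fin d → ℝ) → ℝ)
    (hgmeas : ∀ n, Measurable (g n))
    (hg01 : ∀ n, ∀ ω, g n ω ∈ Set.Icc (0 : ℝ) 1)
    (hG : ∀ᵐ ω : Fin d → ℝ ∂volume,
      (∀ n : ℕ,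
        (∑' l : Fin d → ℤ,
          g n (ω - (2 * π) • (B.transpose)⁻¹.mulVec (fun i => (l i : ℝ)))) ≤ 1) ∧
      Tendsto (fun n : ℕ =>
          ∑' l : Fin d → ℤ,
            g n (ω - (2 * π) • (B.transpose)⁻¹.mulVec (fun i => (l i : ℝ))))
        atTop (nhds 1)) :
    ∀ k : Fin d → ℤ, k ≠ 0 →
      Tendsto (fun n : ℕ =>
          ∫ ω : Fin d → ℝ,
            (g n ω : ℂ) *
              Complex.exp (-(Complex.I *
                ((B.mulVec (fun i => (k i : ℝ)) ⬝ᵥ ω : ℝ) : ℂ))))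
        atTop (nhds 0) := by
  intro k hk
  -- notation
  set lam : (Fin d → ℤ) → (Fin d → ℝ) :=
    fun l => (2 * π) • (B.transpose)⁻¹.mulVec (fun i => (l i : ℝ)) with hlam_def
  set v : Fin d → ℝ := B.mulVec (fun i => (k i : ℝ)) with hv_def
  set e : (Fin d → ℝ) → ℂ :=
    fun x => Complex.exp (-(Complex.I * ((v ⬝ᵥ x : ℝ) : ℂ))) with he_def
  -- basic properties of lam
  have lam_add : ∀ a b : Fin d → ℤ, lam (a + b) = lam a + lam b := by
    intro a b
    have : (fun i => ((a + b) i : ℝ)) = (fun i => (a i : ℝ)) + fun i => (b i : ℝ) := by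
      funext i; push_cast; simp
    simp only [hlam_def, this, Matrix.mulVec_add, smul_add]
  have lam_zero : lam 0 = 0 := by
    have : (fun i => ((0 : Fin d → ℤ) i : ℝ)) = (0 : Fin d → ℝ) := by funext i; simp
    simp only [hlam_def, this, Matrix.mulVec_zero, smul_zero]
  have lam_neg : ∀ a : Fin d → ℤ, lam (-a) = -lam a := by
    intro a
    have : (fun i => ((-a) i : ℝ)) = -(fun i => (a i : ℝ)) := by funext i; push_cast; simp
    simp only [hlam_def, this, Matrix.mulVec_neg, smul_neg]
  -- v ⬝ᵥ lam l = 2π * (k ⬝ᵥ l)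
  have hv_lam : ∀ l : Fin d → ℤ, v ⬝ᵥ lam l = 2 * π * ((k ⬝ᵥ l : ℤ) : ℝ) := by
    intro l
    have h1 : v ⬝ᵥ lam l = (2 * π) * (v ⬝ᵥ (B.transpose)⁻¹.mulVec fun i => (l i : ℝ)) := by
      rw [hlam_def, dotProduct_smul, smul_eq_mul]
    have h2 : v ⬝ᵥ (B.transpose)⁻¹.mulVec (fun i => (l i : ℝ))
        = (fun i => (k i : ℝ)) ⬝ᵥ (fun i => (l i : ℝ)) := by
      rw [Matrix.dotProduct_mulVec, ← Matrix.transpose_nonsing_inv, Matrix.vecMul_transpose,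
        hv_def, Matrix.mulVec_mulVec, Matrix.nonsing_inv_mul B hB, Matrix.one_mulVec]
    have h3 : (fun i => (k i : ℝ)) ⬝ᵥ (fun i => (l i : ℝ)) = ((k ⬝ᵥ l : ℤ) : ℝ) := by
      simp [dotProduct]
    rw [h1, h2, h3]
  -- e is lattice-periodic
  have he_period : ∀ (l : Fin d → ℤ) (x : Fin d → ℝ), e (x + lam l) = e x := by
    intro l x
    have h1 : (v ⬝ᵥ (x + lam l) : ℝ) = v ⬝ᵥ x + 2 * π * ((k ⬝ᵥ l : ℤ) : ℝ) := by
      rw [dotProduct_add, hv_lam]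
    simp only [he_def, h1]
    exact exp_aux (v ⬝ᵥ x) (k ⬝ᵥ l)
  have he_norm : ∀ x, ‖e x‖ = 1 := fun x => norm_exp_aux (v ⬝ᵥ x)
  have he_cont : Continuous e := by
    have hdot : Continuous fun x : Fin d → ℝ => v ⬝ᵥ x := by
      simp only [dotProduct]
      exact continuous_finset_sum _ fun i _ => continuous_const.mul (continuous_apply i)
    exact (Continuous.neg (continuous_const.mul (Complex.continuous_ofReal.comp hdot))).cexp
  -- the lattice action
  letI : VAdd (Fin d → ℤ) (Fin d → ℝ) := ⟨fun l x => x + lam l⟩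
  have hvadd0 : ∀ (l : Fin d → ℤ) (x : Fin d → ℝ), l +ᵥ x = x + lam l := fun _ _ => rfl
  letI : AddAction (Fin d → ℤ) (Fin d → ℝ) :=
    { zero_vadd := fun x => by rw [hvadd0, lam_zero, add_zero]
      add_vadd := fun a b x => by
        simp only [hvadd0, lam_add]; abel }
  letI : MeasurableVAdd (Fin d → ℤ) (Fin d → ℝ) :=
    { measurable_const_vadd := fun l => by
        simpa only [hvadd0] using measurable_add_const (lam l)
      measurable_vadd_const := fun x => measurable_of_countable _ }
  letI : VAddInvariantMeasure (Fin d → ℤ) (Fin d → ℝ) volume :=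
    { measure_preimage_vadd := fun l s hs => by
        simpa only [hvadd0] using
          (measurePreserving_add_right volume (lam l)).measure_preimage hs.nullMeasurableSet }
  have hvadd : ∀ (l : Fin d → ℤ) (x : Fin d → ℝ), l +ᵥ x = x + lam l := fun _ _ => rfl
  -- Ω is a fundamental domain
  have hexu : ∀ x : Fin d → ℝ, ∃! l : Fin d → ℤ, x + lam l ∈ Ω := by
    intro x
    have hsum := hfund x
    set F : (Fin d → ℤ) → ℝ := fun l => Set.indicator Ω (fun _ => (1 : ℝ)) (x + lam l) with hF
    have hFnn : ∀ l, 0 ≤ F l := fun l => Set.indicator_nonneg (fun _ _ => zero_le_one) _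
    have hS : Summable F := by
      by_contra h
      rw [tsum_eq_zero_of_not_summable h] at hsum
      exact zero_ne_one hsum
    have hex : ∃ l, x + lam l ∈ Ω := by
      by_contra h
      push_neg at h
      have hz : ∀ l, F l = 0 := fun l => Set.indicator_of_notMem (h l) _
      rw [show (∑' l, F l) = 0 by simp [hz]] at hsum
      exact zero_ne_one hsum
    obtain ⟨l₀, hl₀⟩ := hex
    refine ⟨l₀, hl₀, ?_⟩
    intro l₁ hl₁
    by_contra hne
    have hfs : ∑ l ∈ ({l₁, l₀} : Finset (Fin d → ℤ)), F l ≤ ∑' l, F l :=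
      Summable.sum_le_tsum _ (fun l _ => hFnn l) hS
    have h2 : ∑ l ∈ ({l₁, l₀} : Finset (Fin d → ℤ)), F l = 2 := by
      rw [Finset.sum_insert (by simpa using hne), Finset.sum_singleton]
      simp only [hF]
      rw [Set.indicator_of_mem hl₁, Set.indicator_of_mem hl₀]
      norm_num
    rw [h2, hsum] at hfs
    linarith
  have hfd : IsAddFundamentalDomain (Fin d → ℤ) Ω volume :=
    IsAddFundamentalDomain.mk' hΩmeas.nullMeasurableSet fun x => hexu x
  -- the translate by t with v ⬝ᵥ t = π is also a fundamental domain
  have hvne : v ≠ 0 := by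
    intro h0
    apply hk
    have hkr : (fun i => (k i : ℝ)) = 0 := by
      have : B⁻¹.mulVec (B.mulVec fun i => (k i : ℝ)) = 0 := by
        rw [← hv_def, h0, Matrix.mulVec_zero]
      rwa [Matrix.mulVec_mulVec, Matrix.nonsing_inv_mul B hB, Matrix.one_mulVec] at this
    funext i
    have h5 := congrFun hkr i
    rw [Pi.zero_apply] at h5
    simp only [Pi.zero_apply]
    exact_mod_cast h5
  have hvv : v ⬝ᵥ v ≠ 0 := fun h => hvne (dotProduct_self_eq_zero.mp h)
  set t : Fin d → ℝ := (π / (v ⬝ᵥ v)) • v with ht_def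
  have hvt : v ⬝ᵥ t = π := by
    rw [ht_def, dotProduct_smul, smul_eq_mul, div_mul_cancel₀ _ hvv]
  set Ωt : Set (Fin d → ℝ) := (fun x => x - t) ⁻¹' Ω with hΩt_def
  have hfdt : IsAddFundamentalDomain (Fin d → ℤ) Ωt volume := by
    refine IsAddFundamentalDomain.mk'
      ((hΩmeas.preimage (measurable_sub_const t)).nullMeasurableSet) fun x => ?_
    have := hexu (x - t)
    simpa [hvadd, hΩt_def, Set.mem_preimage, add_sub_right_comm] using this
  -- the character integrates to zero over Ω
  have he_t : ∀ x, e (x + t) = -e x := by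
    intro x
    have h1 : (v ⬝ᵥ (x + t) : ℝ) = v ⬝ᵥ x + π := by rw [dotProduct_add, hvt]
    simp only [he_def, h1]
    exact exp_aux2 (v ⬝ᵥ x)
  have he0 : ∫ x in Ω, e x = 0 := by
    have h1 : ∫ x in Ω, e x = ∫ x in Ωt, e x :=
      hfd.setIntegral_eq hfdt (f := e) fun l x => by rw [hvadd, he_period]
    have himg : (fun x => x + t) '' Ω = Ωt := by
      ext y
      constructor
      · rintro ⟨a, ha, rfl⟩
        simpa [hΩt_def] using ha
      · intro hy
        exact ⟨y - t, hy, by simp⟩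
    have h2 : ∫ x in Ωt, e x = ∫ x in Ω, e (x + t) := by
      rw [← himg]
      exact (measurePreserving_add_right volume t).setIntegral_image_emb
        (measurableEmbedding_addRight t) e Ω
    have h3 : ∫ x in Ω, e (x + t) = -∫ x in Ω, e x := by
      simp_rw [he_t]; exact integral_neg e
    have : ∫ x in Ω, e x = -∫ x in Ω, e x := h1.trans (h2.trans h3)
    have h4 : (∫ x in Ω, e x) + ∫ x in Ω, e x = 0 := by
      linear_combination this
    exact add_self_eq_zero.mp h4
  -- the periodization
  set T : ℕ → (Fin d → ℝ) → ℝ :=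
    fun n x => (∑' l : Fin d → ℤ, ENNReal.ofReal (g n (x + lam l))).toReal with hT_def
  have Teq : ∀ n x, T n x = ∑' l : Fin d → ℤ, g n (x + lam l) := fun n x =>
    tsum_ofReal_toReal _ fun l => (hg01 n _).1
  have Tnn : ∀ n x, 0 ≤ T n x := fun n x => ENNReal.toReal_nonneg
  have Tmeas : ∀ n, Measurable (T n) := by
    intro n
    apply Measurable.ennreal_toReal
    exact Measurable.ennreal_tsum fun l =>
      ENNReal.measurable_ofReal.comp ((hgmeas n).comp (measurable_add_const (lam l)))
  have hswap : ∀ n (x : Fin d → ℝ),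
      (∑' l : Fin d → ℤ, g n (x - lam l)) = ∑' l : Fin d → ℤ, g n (x + lam l) := by
    intro n x
    rw [← (Equiv.neg (Fin d → ℤ)).tsum_eq (fun l => g n (x + lam l))]
    refine tsum_congr fun l => ?_
    rw [Equiv.neg_apply, lam_neg, ← sub_eq_add_neg]
  have hGT : ∀ᵐ x : Fin d → ℝ ∂volume,
      (∀ n, T n x ≤ 1) ∧ Tendsto (fun n => T n x) atTop (nhds 1) := by
    filter_upwards [hG] with x hx
    have heq : ∀ n, T n x = ∑' l : Fin d → ℤ,
        g n (x - (2 * π) • (B.transpose)⁻¹.mulVec fun i => (l i : ℝ)) := by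
      intro n; rw [Teq n x, ← hswap n x]
    constructor
    · intro n; rw [heq n]; exact hx.1 n
    · have := hx.2
      refine this.congr fun n => ?_
      rw [heq n]
  -- finite volume of Ω
  have hΩfin : volume Ω < ⊤ := hΩbdd.measure_lt_top
  -- the dominating sequence
  set ε : ℕ → ℝ := fun n => ∫ x in Ω, (1 - T n x) ∂volume with hε_def
  have hε0 : Tendsto ε atTop (nhds 0) := by
    have h0 : (0 : ℝ) = ∫ _ in Ω, (0 : ℝ) ∂volume := by simp
    rw [hε_def, h0]
    refine tendsto_integral_of_dominated_convergence (fun _ => (1 : ℝ))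
      (fun n => (measurable_const.sub (Tmeas n)).aestronglyMeasurable) ?_ ?_ ?_
    · exact (integrableOn_const_iff (C := (1 : ℝ)) (by simp)).2 (Or.inr hΩfin)
    · intro n
      filter_upwards [ae_restrict_of_ae hGT] with x hx
      rw [Real.norm_eq_abs, abs_of_nonneg (sub_nonneg.2 (hx.1 n))]
      linarith [Tnn n x]
    · filter_upwards [ae_restrict_of_ae hGT] with x hx
      simpa using hx.2.const_sub 1
  -- the key estimate
  have key : ∀ n, ‖∫ ω : Fin d → ℝ, (g n ω : ℂ) * e ω‖ ≤ ε n := by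
    intro n
    have hεnn : 0 ≤ ε n := by
      refine integral_nonneg_of_ae ?_
      filter_upwards [ae_restrict_of_ae hGT] with x hx
      simp only [Pi.zero_apply]
      linarith [hx.1 n]
    by_cases hInt : Integrable (fun ω : Fin d → ℝ => (g n ω : ℂ) * e ω) volume
    swap
    · rw [integral_undef hInt, norm_zero]; exact hεnn
    -- unfold over the fundamental domain
    have hstep1 : ∫ ω : Fin d → ℝ, (g n ω : ℂ) * e ω
        = ∑' l : Fin d → ℤ, ∫ x in Ω, (g n (x + lam l) : ℂ) * e x := by
      rw [hfd.integral_eq_tsum'' _ hInt]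
      refine tsum_congr fun l => ?_
      refine integral_congr_ae (Filter.Eventually.of_forall fun x => ?_)
      show (g n (x + lam l) : ℂ) * e (x + lam l) = (g n (x + lam l) : ℂ) * e x
      rw [he_period]
    -- swap sum and integral
    have hmeas_l : ∀ l : Fin d → ℤ, AEStronglyMeasurable
        (fun x => (g n (x + lam l) : ℂ) * e x) (volume.restrict Ω) := by
      intro l
      exact ((Complex.measurable_ofReal.comp
        ((hgmeas n).comp (measurable_add_const (lam l)))).mul he_cont.measurable)
        |>.aestronglyMeasurable
    have hnn_eq : ∀ y : Fin d → ℝ, ∀ x : Fin d → ℝ,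
        (‖(g n y : ℂ) * e x‖₊ : ENNReal) = ENNReal.ofReal (g n y) := by
      intro y x
      have h1 : ‖(g n y : ℂ) * e x‖ = g n y := by
        rw [norm_mul, he_norm, mul_one, Complex.norm_real, Real.norm_eq_abs,
          abs_of_nonneg (hg01 n y).1]
      rw [← enorm_eq_nnnorm, ← ofReal_norm, h1]
    have hfin : (∑' l : Fin d → ℤ,
        ∫⁻ x in Ω, ‖(g n (x + lam l) : ℂ) * e x‖₊ ∂volume) ≠ ⊤ := by
      have hcalc : (∑' l : Fin d → ℤ,
          ∫⁻ x in Ω, ‖(g n (x + lam l) : ℂ) * e x‖₊ ∂volume)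
          = ∫⁻ y, ENNReal.ofReal (g n y) ∂volume := by
        rw [hfd.lintegral_eq_tsum'' (fun y => ENNReal.ofReal (g n y))]
        refine tsum_congr fun l => lintegral_congr fun x => ?_
        rw [hnn_eq, hvadd]
      rw [hcalc]
      have := hInt.hasFiniteIntegral
      rw [HasFiniteIntegral] at this
      have heqnorm : ∫⁻ y, ENNReal.ofReal (g n y) ∂volume
          = ∫⁻ y, ‖(g n y : ℂ) * e y‖₊ ∂volume :=
        lintegral_congr fun y => (hnn_eq y y).symm
      rw [heqnorm]
      exact this.ne
    have hstep2 : ∑' l : Fin d → ℤ, ∫ x in Ω, (g n (x + lam l) : ℂ) * e x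
        = ∫ x in Ω, (∑' l : Fin d → ℤ, (g n (x + lam l) : ℂ) * e x) := by
      exact (integral_tsum hmeas_l hfin).symm
    have hstep3 : ∀ x : Fin d → ℝ,
        (∑' l : Fin d → ℤ, (g n (x + lam l) : ℂ) * e x) = (T n x : ℂ) * e x := by
      intro x
      rw [tsum_mul_right, ← Complex.ofReal_tsum, Teq n x]
    -- integrability of the pieces on Ω
    have hTint : IntegrableOn (fun x => (T n x : ℂ) * e x) Ω volume := by
      refine Integrable.mono' ((integrableOn_const_iff (C := (1 : ℝ)) (by simp)).2 (Or.inr hΩfin))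
        (((Complex.measurable_ofReal.comp (Tmeas n)).mul he_cont.measurable)
          |>.aestronglyMeasurable) ?_
      filter_upwards [ae_restrict_of_ae hGT] with x hx
      rw [norm_mul, he_norm, mul_one, Complex.norm_real, Real.norm_eq_abs,
        abs_of_nonneg (Tnn n x)]
      exact hx.1 n
    have heint : IntegrableOn e Ω volume := by
      refine Integrable.mono' ((integrableOn_const_iff (C := (1 : ℝ)) (by simp)).2 (Or.inr hΩfin))
        he_cont.aestronglyMeasurable ?_
      filter_upwards with x
      rw [he_norm]
    have hstep4 : ∫ x in Ω, (T n x : ℂ) * e x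
        = ∫ x in Ω, ((T n x : ℂ) - 1) * e x := by
      have hsub : ∫ x in Ω, ((T n x : ℂ) - 1) * e x
          = (∫ x in Ω, (T n x : ℂ) * e x) - ∫ x in Ω, e x := by
        rw [← integral_sub hTint heint]
        exact integral_congr_ae (Filter.Eventually.of_forall fun x => by ring)
      rw [hsub, he0, sub_zero]
    have hfinal : ∫ ω : Fin d → ℝ, (g n ω : ℂ) * e ω
        = ∫ x in Ω, ((T n x : ℂ) - 1) * e x := by
      rw [hstep1, hstep2, ← hstep4]
      exact integral_congr_ae (Filter.Eventually.of_forall fun x => hstep3 x)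
    rw [hfinal]
    calc ‖∫ x in Ω, ((T n x : ℂ) - 1) * e x‖
        ≤ ∫ x in Ω, ‖((T n x : ℂ) - 1) * e x‖ ∂volume := norm_integral_le_integral_norm _
      _ ≤ ε n := by
          rw [hε_def]
          refine le_of_eq (integral_congr_ae ?_)
          filter_upwards [ae_restrict_of_ae hGT] with x hx
          rw [norm_mul, he_norm, mul_one,
            show ((T n x : ℂ) - 1) = (((T n x - 1 : ℝ)) : ℂ) by push_cast; ring,
            Complex.norm_real, Real.norm_eq_abs, abs_sub_comm,
            abs_of_nonneg (sub_nonneg.2 (hx.1 n))]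
  -- conclude
  rw [tendsto_zero_iff_norm_tendsto_zero]
  exact squeeze_zero (fun n => norm_nonneg _) key hε0
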